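/- If M₁, ..., Mₙ are pairwise anticommuting Hermitian operators on a finite-dimensional Hilbert space satisfying Mᵢ² = 1 (i.e., with eigenvalues ±1), then for any density matrix ρ, the sum of squared expectation values satisfies ∑ᵢ (Tr(ρ Mᵢ))² ≤ 1. -/

import Mathlib

open Matrix
open scoped ComplexOrder

lemma psd_trace_re_nonneg {d : ℕ} {A : Matrix (Fin d) (Fin d) ℂ}
    (hA : A.PosSemidef) : 0 ≤ A.trace.re := by
  have h : ∀ i, 0 ≤ A i i := by
    intro i
    exact hA.diag_nonneg
  rw [Matrix.trace, Complex.re_sum]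
  exact Finset.sum_nonneg fun i _ => by
    have := h i
    rw [Complex.le_def] at this
    simpa using this.1

lemma psd_real_smul {d : ℕ} {A : Matrix (Fin d) (Fin d) ℂ}
    (hA : A.PosSemidef) (c : ℝ) (hc : 0 ≤ c) : (c • A).PosSemidef := by
  rw [posSemidef_iff_dotProduct_mulVec]
  constructor
  · show (c • A)ᴴ = c • A
    rw [Matrix.conjTranspose_smul, hA.1.eq, star_trivial]
  · intro x
    have h1 := hA.dotProduct_mulVec_nonneg x
    have hcc : (0:ℂ) ≤ (c:ℂ) := Complex.zero_le_real.mpr hc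
    calc (0:ℂ) = (c:ℂ) * 0 := by ring
    _ ≤ (c:ℂ) * (dotProduct (star x) (A.mulVec x)) :=
        mul_le_mul_of_nonneg_left h1 hcc
    _ = dotProduct (star x) ((c • A).mulVec x) := by
        rw [Matrix.smul_mulVec, dotProduct_smul]
        rw [Complex.real_smul]

theorem anticommuting_expectation_bound (d n : ℕ)
    (M : Fin n → Matrix (Fin d) (Fin d) ℂ)
    (hherm : ∀ i, (M i).IsHermitian)
    (hinv : ∀ i, M i * M i = 1)
    (hanti : ∀ i j, i ≠ j → M i * M j = - (M j * M i))
    (ρ : Matrix (Fin d) (Fin d) ℂ)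
    (hρ : ρ.PosSemidef) (htr : ρ.trace = 1) :
    ∑ i, ((ρ * M i).trace.re) ^ 2 ≤ 1 := by
  set t : Fin n → ℝ := fun i => ((ρ * M i).trace.re) with ht
  set S : ℝ := ∑ i, t i ^ 2 with hS
  have hS0 : 0 ≤ S := Finset.sum_nonneg fun i _ => sq_nonneg _
  show S ≤ 1
  rcases eq_or_lt_of_le hS0 with hz | hpos
  · linarith
  set Mt : Matrix (Fin d) (Fin d) ℂ := ∑ i, t i • M i with hMt
  have hMtherm : Mt.IsHermitian := by
    show Mtᴴ = Mt
    rw [hMt, Matrix.conjTranspose_sum]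
    refine Finset.sum_congr rfl fun i _ => ?_
    rw [Matrix.conjTranspose_smul, (hherm i).eq, star_trivial]
  have hsq : Mt * Mt = S • 1 := by
    have expand : Mt * Mt = ∑ i, ∑ j, (t i * t j) • (M i * M j) := by
      rw [hMt, Finset.sum_mul_sum]
      refine Finset.sum_congr rfl fun i _ => Finset.sum_congr rfl fun j _ => ?_
      rw [smul_mul_smul_comm]
    have hdd : Mt * Mt + Mt * Mt = (2 * S) • 1 := by
      nth_rewrite 2 [expand]
      nth_rewrite 1 [expand]
      nth_rewrite 2 [Finset.sum_comm]
      rw [← Finset.sum_add_distrib]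
      have hterm : ∀ i ∈ Finset.univ, (∑ j, (t i * t j) • (M i * M j)
          + ∑ j, (t j * t i) • (M j * M i))
          = (2 * t i ^ 2) • (1 : Matrix (Fin d) (Fin d) ℂ) := by
        intro i _
        rw [← Finset.sum_add_distrib]
        rw [Finset.sum_eq_single i]
        · rw [hinv i, ← add_smul]; ring_nf
        · intro j _ hj
          rw [hanti i j (Ne.symm hj), smul_neg, mul_comm (t i) (t j)]
          exact neg_add_cancel _
        · intro h; exact absurd (Finset.mem_univ i) h
      rw [Finset.sum_congr rfl hterm, ← Finset.sum_smul, ← Finset.mul_sum, ← hS]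
    have h2 : (2 : ℝ) • (Mt * Mt) = (2 : ℝ) • (S • (1 : Matrix (Fin d) (Fin d) ℂ)) := by
      rw [two_smul, hdd, smul_smul]
    exact smul_right_injective _ two_ne_zero h2
  set r : ℝ := Real.sqrt S with hr
  have hrpos : 0 < r := Real.sqrt_pos.mpr hpos
  have hr2 : r * r = S := Real.mul_self_sqrt hS0
  set P : Matrix (Fin d) (Fin d) ℂ := r • 1 - Mt with hP
  have hPherm : P.IsHermitian := by
    show Pᴴ = P
    rw [hP, Matrix.conjTranspose_sub, Matrix.conjTranspose_smul, Matrix.conjTranspose_one,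
      hMtherm.eq, star_trivial]
  have hP2 : P * P = (2 * r) • P := by
    rw [hP, sub_mul, mul_sub, mul_sub, hsq, smul_mul_smul_comm, one_mul,
      Matrix.smul_mul, one_mul, Matrix.mul_smul, mul_one, ← hr2]
    module
  have hPpsd : P.PosSemidef := by
    have h1 : (P * P).PosSemidef := by
      have := Matrix.posSemidef_conjTranspose_mul_self P
      rwa [hPherm.eq] at this
    have h2 := psd_real_smul (hP2 ▸ h1) (2 * r)⁻¹ (by positivity)
    rwa [smul_smul, inv_mul_cancel₀ (by positivity), one_smul] at h2
  have htrP : 0 ≤ ((ρ * P).trace).re := by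
    open scoped MatrixOrder in
    obtain ⟨B, hB⟩ := CStarAlgebra.nonneg_iff_eq_star_mul_self.mp hρ.nonneg
    have heq : ((Bᴴ)ᴴ * P * Bᴴ).trace = (ρ * P).trace := by
      rw [Matrix.conjTranspose_conjTranspose, Matrix.trace_mul_cycle, hB, star_eq_conjTranspose]
    rw [← heq]
    exact psd_trace_re_nonneg (hPpsd.conjTranspose_mul_mul_same _)
  have hcomp : ((ρ * P).trace).re = r - S := by
    rw [hP, Matrix.mul_sub, Matrix.mul_smul, Matrix.mul_one]
    rw [Matrix.trace_sub, Matrix.trace_smul, htr]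
    have hmt : (ρ * Mt).trace = ∑ i, t i • (ρ * M i).trace := by
      rw [hMt, Finset.mul_sum, Matrix.trace_sum]
      exact Finset.sum_congr rfl fun i _ => by rw [Matrix.mul_smul, Matrix.trace_smul]
    rw [hmt, Complex.sub_re, Complex.re_sum]
    have : ∀ i ∈ Finset.univ, (t i • (ρ * M i).trace).re = t i ^ 2 := by
      intro i _
      rw [Complex.real_smul, Complex.mul_re, Complex.ofReal_re, Complex.ofReal_im]
      simp [ht]
      ring
    rw [Finset.sum_congr rfl this, ← hS]
    simp [Complex.real_smul]
  rw [hcomp] at htrP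
  nlinarith [htrP, hr2, hrpos]
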